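/- Let f_F(y) = λy, f_S(y) = ζy with λ, ζ ≤ 0, let f_{η,1}(y) = φ(ηλ)(λ+ζ)y, and let v solve v̇ = λ(v − (η/2)f_{η,1}(y₀)) + ζy₀ with v(0) = y₀. Then the second-order averaged force f_{η,2}(y₀) = (v(η) − y₀)/η equals φ(ηλ)(λ + ζ)(1 − (ηλ/2)φ(ηλ))·y₀. -/

import Mathlib

/-- The first exponential-integrator function φ(z) = (e^z − 1)/z, φ(0) = 1. -/
noncomputable def phi (z : ℝ) : ℝ := if z = 0 then 1 else (Real.exp z - 1) / z

theorem stmt_11 (lam ζ : ℝ) (hlam : lam ≤ 0) (hζ : ζ ≤ 0) (y₀ η : ℝ) (hη : 0 < η)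
    (v : ℝ → ℝ) (hv0 : v 0 = y₀)
    (hv : ∀ t, HasDerivAt v
      (lam * (v t - η / 2 * (phi (η * lam) * (lam + ζ) * y₀)) + ζ * y₀) t) :
    (v η - y₀) / η = phi (η * lam) * (lam + ζ) * (1 - η * lam / 2 * phi (η * lam)) * y₀ := by
  rcases eq_or_ne lam 0 with h0 | h0
  · subst h0
    have hphi : phi (η * 0) = 1 := by simp [phi]
    -- v' = ζ y₀, so v t = y₀ + ζ y₀ t
    set g : ℝ → ℝ := fun t => v t - ζ * y₀ * t with hg
    have hg' : ∀ t, HasDerivAt g 0 t := by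
      intro t
      have := (hv t).sub ((hasDerivAt_id t).const_mul (ζ * y₀))
      exact this.congr_deriv (by simp)
    have hconst : g η = g 0 :=
      is_const_of_deriv_eq_zero (fun t => (hg' t).differentiableAt)
        (fun t => (hg' t).deriv) η 0
    have hvη : v η = y₀ + ζ * y₀ * η := by
      have : v η - ζ * y₀ * η = v 0 - ζ * y₀ * 0 := hconst
      rw [hv0] at this; linarith
    rw [hvη, hphi]
    field_simp
    ring
  · -- lam ≠ 0
    have hη' : η ≠ 0 := hη.ne'
    have hz : η * lam ≠ 0 := mul_ne_zero hη' h0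
    have hphi : phi (η * lam) = (Real.exp (η * lam) - 1) / (η * lam) := by
      simp [phi, hz]
    set c : ℝ := η / 2 * (phi (η * lam) * (lam + ζ) * y₀) with hc
    set A : ℝ := c - ζ * y₀ / lam with hA
    have hAeq : ∀ t, lam * (v t - c) + ζ * y₀ = lam * (v t - A) := by
      intro t; rw [hA]; field_simp; ring
    set w : ℝ → ℝ := fun t => Real.exp (-(lam * t)) * (v t - A) with hw
    have hw' : ∀ t, HasDerivAt w 0 t := by
      intro t
      have he : HasDerivAt (fun t : ℝ => Real.exp (-(lam * t)))
          (-lam * Real.exp (-(lam * t))) t := by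
        have := (((hasDerivAt_id t).const_mul lam).neg).exp
        simpa [mul_comm] using this
      have hvd : HasDerivAt (fun t => v t - A) (lam * (v t - A)) t := by
        have := (hv t).sub_const A
        rw [hAeq t] at this
        exact this
      have := he.mul hvd
      have h00 : -lam * Real.exp (-(lam * t)) * (v t - A) +
          Real.exp (-(lam * t)) * (lam * (v t - A)) = 0 := by ring
      rw [h00] at this
      exact this
    have hconst : w η = w 0 :=
      is_const_of_deriv_eq_zero (fun t => (hw' t).differentiableAt)
        (fun t => (hw' t).deriv) η 0
    have hE : Real.exp (-(lam * η)) ≠ 0 := Real.exp_ne_zero _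
    have hvη : v η = Real.exp (lam * η) * (y₀ - A) + A := by
      have h1 : Real.exp (-(lam * η)) * (v η - A) = y₀ - A := by
        have := hconst
        simp only [w, mul_zero, neg_zero, Real.exp_zero, one_mul, hv0] at this
        simpa using this
      have h2 : v η - A = Real.exp (lam * η) * (y₀ - A) := by
        have := congrArg (fun x => Real.exp (lam * η) * x) h1
        rw [← mul_assoc, ← Real.exp_add] at this
        simpa using this
      linarith
    rw [hvη, hphi, hA, hc, hphi]
    have hEne : Real.exp (η * lam) = Real.exp (lam * η) := by rw [mul_comm]
    rw [hEne]
    field_simp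
    ring
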